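/- Let ε > 0, δ > 0 with δ ≤ ε, and let x, y, x', y' ∈ ℝ^D satisfy ‖x − x'‖ ≤ δ and ‖y − y'‖ ≤ δ. Then |exp(−‖x − y‖²/(4ε²)) − exp(−‖x' − y'‖²/(4ε²))| ≤ 2δ/ε. -/

import Mathlib

open MeasureTheory

noncomputable section

/-- The Gaussian-like kernel `k_ε(x,y) = exp(-‖x-y‖²/(4ε²))`. -/
def gaussKer {D : ℕ} (ε : ℝ) (x y : EuclideanSpace ℝ (Fin D)) : ℝ :=
  Real.exp (-‖x - y‖ ^ 2 / (4 * ε ^ 2))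

lemma exp_sq_aux {u v : ℝ} (hu : 0 ≤ u) (huv : u ≤ v) :
    Real.exp (-u ^ 2) - Real.exp (-v ^ 2) ≤ 2 * (v - u) := by
  rcases le_or_gt 1 (v - u) with h | h
  · have h1 : Real.exp (-u ^ 2) ≤ 1 := by
      apply Real.exp_le_one_iff.mpr; nlinarith
    have h2 : 0 < Real.exp (-v ^ 2) := Real.exp_pos _
    linarith
  · have key : Real.exp (-u ^ 2) - Real.exp (-v ^ 2)
        ≤ Real.exp (-u ^ 2) * (v ^ 2 - u ^ 2) := by
      have : Real.exp (-v ^ 2) = Real.exp (-u ^ 2) * Real.exp (-(v ^ 2 - u ^ 2)) := by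
        rw [← Real.exp_add]; ring_nf
      rw [this]
      have hs : 0 ≤ v ^ 2 - u ^ 2 := by nlinarith
      have h1 : 1 - (v ^ 2 - u ^ 2) ≤ Real.exp (-(v ^ 2 - u ^ 2)) := by
        have := Real.add_one_le_exp (-(v ^ 2 - u ^ 2)); linarith
      nlinarith [Real.exp_pos (-u ^ 2)]
    have hue : u * Real.exp (-u ^ 2) ≤ 1 / 2 := by
      have h1 : 1 + u ^ 2 ≤ Real.exp (u ^ 2) := by
        have := Real.add_one_le_exp (u ^ 2); linarith
      have hprod : Real.exp (-u ^ 2) * Real.exp (u ^ 2) = 1 := by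
        rw [← Real.exp_add]; simp
      nlinarith [Real.exp_pos (-u ^ 2),
        mul_nonneg (Real.exp_pos (-u ^ 2)).le (by nlinarith [sq_nonneg (u - 1)] : 0 ≤ Real.exp (u ^ 2) - 2 * u)]
    have he1 : Real.exp (-u ^ 2) ≤ 1 := Real.exp_le_one_iff.mpr (by nlinarith)
    have hfac : Real.exp (-u ^ 2) * (v ^ 2 - u ^ 2)
        = (v - u) * ((u + v) * Real.exp (-u ^ 2)) := by ring
    have : (u + v) * Real.exp (-u ^ 2) ≤ 2 := by
      have hv : v ≤ u + 1 := by linarith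
      nlinarith [Real.exp_pos (-u ^ 2)]
    nlinarith [sub_nonneg.mpr huv, Real.exp_pos (-u ^ 2)]

lemma exp_sq_lip {u v : ℝ} (hu : 0 ≤ u) (hv : 0 ≤ v) :
    |Real.exp (-u ^ 2) - Real.exp (-v ^ 2)| ≤ 2 * |u - v| := by
  rcases le_total u v with h | h
  · have hm : Real.exp (-v ^ 2) ≤ Real.exp (-u ^ 2) :=
      Real.exp_le_exp.mpr (neg_le_neg (by nlinarith))
    rw [abs_of_nonneg (by linarith), abs_of_nonpos (by linarith), neg_sub]
    exact exp_sq_aux hu h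
  · have hm : Real.exp (-u ^ 2) ≤ Real.exp (-v ^ 2) :=
      Real.exp_le_exp.mpr (neg_le_neg (by nlinarith))
    rw [abs_of_nonpos (by linarith), abs_of_nonneg (by linarith), neg_sub]
    exact exp_sq_aux hv h

/-- Perturbation bound for the Gaussian kernel: if the arguments move by at
most `δ ≤ ε`, the kernel value moves by at most `2δ/ε`. -/
theorem stmt11 {D : ℕ} (ε δ : ℝ) (hε : 0 < ε) (hδ : 0 < δ) (hδε : δ ≤ ε)
    (x y x' y' : EuclideanSpace ℝ (Fin D))
    (hx : ‖x - x'‖ ≤ δ) (hy : ‖y - y'‖ ≤ δ) :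
    |gaussKer ε x y - gaussKer ε x' y'| ≤ 2 * δ / ε := by
  set a := ‖x - y‖ with ha
  set b := ‖x' - y'‖ with hb
  have hab : |a - b| ≤ 2 * δ := by
    have h1 : |a - b| ≤ ‖(x - y) - (x' - y')‖ := abs_norm_sub_norm_le _ _
    have h2 : (x - y) - (x' - y') = (x - x') - (y - y') := by abel
    have h3 : ‖(x - x') - (y - y')‖ ≤ ‖x - x'‖ + ‖y - y'‖ := norm_sub_le _ _
    rw [h2] at h1; linarith
  set u := a / (2 * ε) with hu
  set v := b / (2 * ε) with hv
  have hε2 : (0:ℝ) < 2 * ε := by linarith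
  have hgu : gaussKer ε x y = Real.exp (-u ^ 2) := by
    unfold gaussKer; rw [hu, ← ha]
    congr 1
    field_simp
    ring
  have hgv : gaussKer ε x' y' = Real.exp (-v ^ 2) := by
    unfold gaussKer; rw [hv, ← hb]
    congr 1
    field_simp
    ring
  rw [hgu, hgv]
  have h := exp_sq_lip (u := u) (v := v)
    (div_nonneg (norm_nonneg _) hε2.le) (div_nonneg (norm_nonneg _) hε2.le)
  have huv : |u - v| ≤ δ / ε := by
    rw [hu, hv, div_sub_div_same, abs_div, abs_of_pos hε2]
    rw [div_le_div_iff₀ hε2 hε]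
    calc |a - b| * ε ≤ (2 * δ) * ε := by
          exact mul_le_mul_of_nonneg_right hab hε.le
      _ = δ * (2 * ε) := by ring
  calc |Real.exp (-u ^ 2) - Real.exp (-v ^ 2)| ≤ 2 * |u - v| := h
    _ ≤ 2 * (δ / ε) := by linarith
    _ = 2 * δ / ε := by ring
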